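/- (Tsirelson's bound) For any Hermitian operators A₀, A₁ on H_A and B₀, B₁ on H_B with A_x² = I and B_y² = I, and any state vector |ψ⟩ ∈ H_A ⊗ H_B, one has |⟨ψ| A₀⊗B₀ + A₀⊗B₁ + A₁⊗B₀ − A₁⊗B₁ |ψ⟩| ≤ 2√2. -/

import Mathlib

open Matrix Kronecker
open scoped Matrix.Norms.L2Operator

lemma kron_sub_left {l m p q : Type*} (A B : Matrix l m ℂ) (C : Matrix p q ℂ) :
    (A - B) ⊗ₖ C = A ⊗ₖ C - B ⊗ₖ C := by
  ext ⟨i, j⟩ ⟨k, s⟩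
  simp [Matrix.kroneckerMap_apply, sub_mul]

lemma kron_sub_right {l m p q : Type*} (A : Matrix l m ℂ) (B C : Matrix p q ℂ) :
    A ⊗ₖ (B - C) = A ⊗ₖ B - A ⊗ₖ C := by
  ext ⟨i, j⟩ ⟨k, s⟩
  simp [Matrix.kroneckerMap_apply, mul_sub]

lemma kron_conjTranspose {l m p q : Type*} (A : Matrix l m ℂ) (B : Matrix p q ℂ) :
    (A ⊗ₖ B)ᴴ = Aᴴ ⊗ₖ Bᴴ := by
  ext ⟨i, j⟩ ⟨k, s⟩
  simp [Matrix.kroneckerMap_apply, Matrix.conjTranspose_apply]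

/-- The L2 operator norm of a Hermitian involution is 1. -/
lemma norm_herm_invol {N : Type*} [Fintype N] [DecidableEq N] [Nonempty N]
    (M : Matrix N N ℂ) (hM : M.IsHermitian) (hsq : M * M = 1) : ‖M‖ = 1 := by
  have h := Matrix.l2_opNorm_conjTranspose_mul_self M
  rw [hM.eq, hsq] at h
  have h1 : ‖(1 : Matrix N N ℂ)‖ = 1 := CStarRing.norm_one
  nlinarith [norm_nonneg M, h1 ▸ h]

theorem stmt6 {m n : ℕ}
    (A₀ A₁ : Matrix (Fin m) (Fin m) ℂ) (B₀ B₁ : Matrix (Fin n) (Fin n) ℂ)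
    (hA₀ : A₀.IsHermitian) (hA₁ : A₁.IsHermitian)
    (hB₀ : B₀.IsHermitian) (hB₁ : B₁.IsHermitian)
    (hA₀sq : A₀ * A₀ = 1) (hA₁sq : A₁ * A₁ = 1)
    (hB₀sq : B₀ * B₀ = 1) (hB₁sq : B₁ * B₁ = 1)
    (ψ : Fin m × Fin n → ℂ) (hψ : ∑ p, star (ψ p) * ψ p = 1) :
    ‖(star ψ ⬝ᵥ
        ((A₀ ⊗ₖ B₀ + A₀ ⊗ₖ B₁ + A₁ ⊗ₖ B₀ - A₁ ⊗ₖ B₁).mulVec ψ))‖ ≤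
      2 * Real.sqrt 2 := by
  rcases isEmpty_or_nonempty (Fin m × Fin n) with hE | hE
  · rw [Finset.univ_eq_empty, Finset.sum_empty] at hψ
    exact absurd hψ (by norm_num)
  set S : Matrix (Fin m × Fin n) (Fin m × Fin n) ℂ :=
    A₀ ⊗ₖ B₀ + A₀ ⊗ₖ B₁ + A₁ ⊗ₖ B₀ - A₁ ⊗ₖ B₁ with hS
  -- S is Hermitian
  have hSH : Sᴴ = S := by
    rw [hS]
    simp only [conjTranspose_add, conjTranspose_sub, kron_conjTranspose,
      hA₀.eq, hA₁.eq, hB₀.eq, hB₁.eq]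
  -- the key algebraic identity
  have hS2 : S * S = (4 : ℂ) • (1 : Matrix (Fin m × Fin n) (Fin m × Fin n) ℂ) +
      (A₀ * A₁ - A₁ * A₀) ⊗ₖ (B₁ * B₀ - B₀ * B₁) := by
    rw [hS]
    simp only [add_mul, mul_add, sub_mul, mul_sub, ← Matrix.mul_kronecker_mul,
      hA₀sq, hA₁sq, hB₀sq, hB₁sq, kron_sub_left, kron_sub_right, Matrix.one_kronecker_one]
    rw [show ((4 : ℂ) • (1 : Matrix (Fin m × Fin n) (Fin m × Fin n) ℂ)) = 1 + 1 + 1 + 1 by module]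
    abel
  -- norms of the hermitian involutions lifted to the big space
  have hnA₀ : ‖A₀ ⊗ₖ (1 : Matrix (Fin n) (Fin n) ℂ)‖ = 1 := by
    refine norm_herm_invol _ ?_ ?_
    · rw [Matrix.IsHermitian, kron_conjTranspose, hA₀.eq, conjTranspose_one]
    · rw [← Matrix.mul_kronecker_mul, hA₀sq, one_mul, Matrix.one_kronecker_one]
  have hnA₁ : ‖A₁ ⊗ₖ (1 : Matrix (Fin n) (Fin n) ℂ)‖ = 1 := by
    refine norm_herm_invol _ ?_ ?_
    · rw [Matrix.IsHermitian, kron_conjTranspose, hA₁.eq, conjTranspose_one]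
    · rw [← Matrix.mul_kronecker_mul, hA₁sq, one_mul, Matrix.one_kronecker_one]
  have hnB₀ : ‖(1 : Matrix (Fin m) (Fin m) ℂ) ⊗ₖ B₀‖ = 1 := by
    refine norm_herm_invol _ ?_ ?_
    · rw [Matrix.IsHermitian, kron_conjTranspose, hB₀.eq, conjTranspose_one]
    · rw [← Matrix.mul_kronecker_mul, hB₀sq, one_mul, Matrix.one_kronecker_one]
  have hnB₁ : ‖(1 : Matrix (Fin m) (Fin m) ℂ) ⊗ₖ B₁‖ = 1 := by
    refine norm_herm_invol _ ?_ ?_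
    · rw [Matrix.IsHermitian, kron_conjTranspose, hB₁.eq, conjTranspose_one]
    · rw [← Matrix.mul_kronecker_mul, hB₁sq, one_mul, Matrix.one_kronecker_one]
  -- commutator norm bounds
  have hcA : ‖(A₀ * A₁ - A₁ * A₀) ⊗ₖ (1 : Matrix (Fin n) (Fin n) ℂ)‖ ≤ 2 := by
    have e : (A₀ ⊗ₖ (1 : Matrix (Fin n) (Fin n) ℂ)) * (A₁ ⊗ₖ 1) - (A₁ ⊗ₖ 1) * (A₀ ⊗ₖ 1) =
        (A₀ * A₁ - A₁ * A₀) ⊗ₖ (1 : Matrix (Fin n) (Fin n) ℂ) := by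
      rw [← Matrix.mul_kronecker_mul, one_mul, ← Matrix.mul_kronecker_mul, one_mul,
        ← kron_sub_left]
    rw [← e]
    calc ‖(A₀ ⊗ₖ 1) * (A₁ ⊗ₖ 1) - (A₁ ⊗ₖ 1) * (A₀ ⊗ₖ 1)‖
        ≤ ‖(A₀ ⊗ₖ 1) * (A₁ ⊗ₖ 1)‖ + ‖(A₁ ⊗ₖ 1) * (A₀ ⊗ₖ (1 : Matrix (Fin n) (Fin n) ℂ))‖ :=
          norm_sub_le _ _
      _ ≤ ‖A₀ ⊗ₖ (1 : Matrix (Fin n) (Fin n) ℂ)‖ * ‖A₁ ⊗ₖ (1 : Matrix (Fin n) (Fin n) ℂ)‖ +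
          ‖A₁ ⊗ₖ (1 : Matrix (Fin n) (Fin n) ℂ)‖ * ‖A₀ ⊗ₖ (1 : Matrix (Fin n) (Fin n) ℂ)‖ :=
          add_le_add (Matrix.l2_opNorm_mul _ _) (Matrix.l2_opNorm_mul _ _)
      _ = 2 := by rw [hnA₀, hnA₁]; ring
  have hcB : ‖(1 : Matrix (Fin m) (Fin m) ℂ) ⊗ₖ (B₁ * B₀ - B₀ * B₁)‖ ≤ 2 := by
    have e : ((1 : Matrix (Fin m) (Fin m) ℂ) ⊗ₖ B₁) * (1 ⊗ₖ B₀) - (1 ⊗ₖ B₀) * (1 ⊗ₖ B₁) =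
        (1 : Matrix (Fin m) (Fin m) ℂ) ⊗ₖ (B₁ * B₀ - B₀ * B₁) := by
      rw [← Matrix.mul_kronecker_mul, one_mul, ← Matrix.mul_kronecker_mul, one_mul,
        ← kron_sub_right]
    rw [← e]
    calc ‖(1 ⊗ₖ B₁) * (1 ⊗ₖ B₀) - (1 ⊗ₖ B₀) * (1 ⊗ₖ B₁)‖
        ≤ ‖((1 : Matrix (Fin m) (Fin m) ℂ) ⊗ₖ B₁) * (1 ⊗ₖ B₀)‖ +
          ‖((1 : Matrix (Fin m) (Fin m) ℂ) ⊗ₖ B₀) * (1 ⊗ₖ B₁)‖ := norm_sub_le _ _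
      _ ≤ ‖(1 : Matrix (Fin m) (Fin m) ℂ) ⊗ₖ B₁‖ * ‖(1 : Matrix (Fin m) (Fin m) ℂ) ⊗ₖ B₀‖ +
          ‖(1 : Matrix (Fin m) (Fin m) ℂ) ⊗ₖ B₀‖ * ‖(1 : Matrix (Fin m) (Fin m) ℂ) ⊗ₖ B₁‖ :=
          add_le_add (Matrix.l2_opNorm_mul _ _) (Matrix.l2_opNorm_mul _ _)
      _ = 2 := by rw [hnB₀, hnB₁]; ring
  -- the tensor commutator term
  have hsplit : ((A₀ * A₁ - A₁ * A₀) ⊗ₖ (1 : Matrix (Fin n) (Fin n) ℂ)) *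
      ((1 : Matrix (Fin m) (Fin m) ℂ) ⊗ₖ (B₁ * B₀ - B₀ * B₁)) =
      (A₀ * A₁ - A₁ * A₀) ⊗ₖ (B₁ * B₀ - B₀ * B₁) := by
    rw [← Matrix.mul_kronecker_mul, mul_one, one_mul]
  have hcomm : ‖(A₀ * A₁ - A₁ * A₀) ⊗ₖ (B₁ * B₀ - B₀ * B₁)‖ ≤ 4 := by
    rw [← hsplit]
    calc ‖_ * _‖ ≤ ‖(A₀ * A₁ - A₁ * A₀) ⊗ₖ (1 : Matrix (Fin n) (Fin n) ℂ)‖ *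
          ‖(1 : Matrix (Fin m) (Fin m) ℂ) ⊗ₖ (B₁ * B₀ - B₀ * B₁)‖ := Matrix.l2_opNorm_mul _ _
      _ ≤ 2 * 2 := by
          apply mul_le_mul hcA hcB (norm_nonneg _) (by norm_num)
      _ = 4 := by norm_num
  -- ‖S * S‖ ≤ 8
  have hSS : ‖S * S‖ ≤ 8 := by
    rw [hS2]
    calc ‖(4 : ℂ) • (1 : Matrix (Fin m × Fin n) (Fin m × Fin n) ℂ) +
          (A₀ * A₁ - A₁ * A₀) ⊗ₖ (B₁ * B₀ - B₀ * B₁)‖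
        ≤ ‖(4 : ℂ) • (1 : Matrix (Fin m × Fin n) (Fin m × Fin n) ℂ)‖ +
          ‖(A₀ * A₁ - A₁ * A₀) ⊗ₖ (B₁ * B₀ - B₀ * B₁)‖ := norm_add_le _ _
      _ ≤ 4 + 4 := by
          refine add_le_add ?_ hcomm
          rw [norm_smul, CStarRing.norm_one]
          simp
      _ = 8 := by norm_num
  -- ‖S‖ ≤ 2√2
  have hSnorm : ‖S‖ ≤ 2 * Real.sqrt 2 := by
    have h := Matrix.l2_opNorm_conjTranspose_mul_self S
    rw [hSH] at h
    have h8 : ‖S‖ * ‖S‖ ≤ 8 := h ▸ hSS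
    nlinarith [norm_nonneg S, Real.sq_sqrt (by norm_num : (2:ℝ) ≥ 0).le, Real.sqrt_nonneg 2,
      Real.sq_sqrt (show (0:ℝ) ≤ 2 by norm_num)]
  -- norm of ψ is 1
  set φ : EuclideanSpace ℂ (Fin m × Fin n) := (WithLp.equiv 2 _).symm ψ with hφ
  have hφnorm : ‖φ‖ = 1 := by
    have hsum : ∑ p, ‖ψ p‖ ^ 2 = (1 : ℝ) := by
      have : ((∑ p, ‖ψ p‖ ^ 2 : ℝ) : ℂ) = 1 := by
        push_cast
        rw [← hψ]
        refine Finset.sum_congr rfl fun p _ => ?_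
        rw [← Complex.ofReal_pow, Complex.sq_norm,
          Complex.normSq_eq_conj_mul_self]
        rfl
      exact_mod_cast this
    rw [EuclideanSpace.norm_eq]
    have : ∀ p, ‖φ p‖ = ‖ψ p‖ := fun p => rfl
    simp_rw [this, hsum, Real.sqrt_one]
  -- finish with Cauchy-Schwarz
  have hdot : star ψ ⬝ᵥ S.mulVec ψ =
      (inner ℂ φ ((WithLp.equiv 2 _).symm (S.mulVec ψ)) : ℂ) := by
    rw [hφ]; exact dotProduct_comm _ _
  rw [hdot]
  calc ‖(inner ℂ φ ((WithLp.equiv 2 _).symm (S.mulVec ψ)) : ℂ)‖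
      ≤ ‖φ‖ * ‖(WithLp.equiv 2 ((Fin m × Fin n) → ℂ)).symm (S.mulVec ψ)‖ :=
        norm_inner_le_norm _ _
    _ ≤ ‖φ‖ * (‖S‖ * ‖φ‖) := by
        refine mul_le_mul_of_nonneg_left ?_ (norm_nonneg _)
        exact Matrix.l2_opNorm_mulVec S φ
    _ ≤ 2 * Real.sqrt 2 := by
        rw [hφnorm]
        simpa using hSnorm
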